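/- Let G be a finitely generated residually finite group and let φ : G → G be a group endomorphism such that φ(G) has finite index in G. Then there exists a natural number n such that the subgroups φ^n(G) and φ^{n+1}(G) have finite index in G and the restriction of φ to φ^n(G) is an isomorphism onto φ^{n+1}(G). -/

import Mathlib

/-- If `G` is a finitely generated residually finite group and `φ : G → G` is an
endomorphism whose image has finite index in `G`, then there is an `n` such that
`φ^n(G)` and `φ^(n+1)(G)` have finite index in `G` and the restriction of `φ` to
`φ^n(G)` is an isomorphism onto `φ^(n+1)(G)` (it is injective on `φ^n(G)` and maps
`φ^n(G)` onto `φ^(n+1)(G)`). -/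
theorem exists_iterate_range_finiteIndex_and_restriction_isomorphism
    (G : Type*) [Group G] [Group.FG G]
    (hres : ∀ x : G, x ≠ 1 → ∃ N : Subgroup G, N.Normal ∧ N.FiniteIndex ∧ x ∉ N)
    (φ : Monoid.End G) (hφ : (φ : G →* G).range.FiniteIndex) :
    ∃ n : ℕ, ((φ ^ n : Monoid.End G) : G →* G).range.FiniteIndex ∧
      ((φ ^ (n + 1) : Monoid.End G) : G →* G).range.FiniteIndex ∧
      Set.InjOn φ (((φ ^ n : Monoid.End G) : G →* G).range : Set G) ∧
      Subgroup.map (φ : G →* G) ((φ ^ n : Monoid.End G) : G →* G).range =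
        ((φ ^ (n + 1) : Monoid.End G) : G →* G).range := by
  classical
  -- abbreviations
  set R : ℕ → Subgroup G := fun n => ((φ ^ n : Monoid.End G) : G →* G).range with hR
  have happ : ∀ (n : ℕ) (x : G), (φ ^ (n + 1) : Monoid.End G) x
      = (φ ^ n : Monoid.End G) (φ x) := by
    intro n x; rw [pow_succ]; rfl
  have happ' : ∀ (n : ℕ) (x : G), (φ ^ (n + 1) : Monoid.End G) x
      = φ ((φ ^ n : Monoid.End G) x) := by
    intro n x; rw [pow_succ']; rfl
  have hmem : ∀ (n : ℕ) (x : G), x ∈ R n ↔ ∃ g, (φ ^ n : Monoid.End G) g = x := by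
    intro n x; exact Iff.rfl
  -- `map φ (R n) = R (n+1)`
  have hmapR : ∀ n : ℕ, Subgroup.map (φ : G →* G) (R n) = R (n + 1) := by
    intro n
    ext y
    constructor
    · rintro ⟨x, ⟨g, rfl⟩, rfl⟩
      exact ⟨g, happ' n g⟩
    · rintro ⟨g, rfl⟩
      exact ⟨(φ ^ n : Monoid.End G) g, ⟨g, rfl⟩, (happ' n g).symm⟩
  -- ranges are antitone
  have hRsucc : ∀ n : ℕ, R (n + 1) ≤ R n := by
    rintro n x ⟨g, rfl⟩
    exact ⟨φ g, (happ n g).symm⟩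
  have hRle : ∀ m n : ℕ, m ≤ n → R n ≤ R m := by
    intro m n h
    induction n with
    | zero => simp_all
    | succ k ih =>
      rcases Nat.lt_or_ge m (k + 1) with h' | h'
      · exact le_trans (hRsucc k) (ih (Nat.lt_succ_iff.mp h'))
      · have : m = k + 1 := le_antisymm h h'
        subst this; exact le_rfl
  -- finite index of all ranges
  have hRfin : ∀ n : ℕ, (R n).FiniteIndex := by
    intro n
    induction n with
    | zero =>
      have : R 0 = ⊤ := by
        rw [eq_top_iff]; intro x _; exact ⟨x, rfl⟩
      rw [this]
      exact ⟨by simp [Subgroup.index_top]⟩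
    | succ k ih =>
      rw [← hmapR k]
      refine ⟨?_⟩
      erw [Subgroup.index_map]
      exact Nat.mul_ne_zero
        (ne_zero_of_dvd_ne_zero ih.index_ne_zero (Subgroup.index_dvd_of_le le_sup_left))
        hφ.index_ne_zero
  -- the increasing chain of preimages
  set A : ℕ → Subgroup G := fun n =>
    Subgroup.comap ((φ ^ n : Monoid.End G) : G →* G) (R (n + 1)) with hA
  have hAmem : ∀ (n : ℕ) (x : G), x ∈ A n ↔ (φ ^ n : Monoid.End G) x ∈ R (n + 1) := by
    intro n x; exact Iff.rfl
  have hφA : ∀ n : ℕ, (φ : G →* G).range ≤ A n := by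
    rintro n x ⟨g, rfl⟩
    exact ⟨g, (happ n g).symm⟩
  have hAfin : ∀ n : ℕ, (A n).FiniteIndex := by
    intro n
    haveI := hφ
    exact Subgroup.finiteIndex_of_le (hφA n)
  have hAsucc : ∀ n : ℕ, A n ≤ A (n + 1) := by
    intro n x hx
    obtain ⟨g, hg⟩ := (hAmem n x).mp hx
    refine (hAmem (n + 1) x).mpr ⟨g, ?_⟩
    exact (happ' (n + 1) g).trans ((congrArg φ hg).trans (happ' n x).symm)
  have hAle : ∀ m n : ℕ, m ≤ n → A m ≤ A n := by
    intro m n h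
    induction n with
    | zero => simp_all
    | succ k ih =>
      rcases Nat.lt_or_ge m (k + 1) with h' | h'
      · exact le_trans (ih (Nat.lt_succ_iff.mp h')) (hAsucc k)
      · have : m = k + 1 := le_antisymm h h'
        subst this; exact le_rfl
  -- pick an index minimizing `(A n).index`
  have hex : ∃ k : ℕ, ∃ n : ℕ, (A n).index = k := ⟨(A 0).index, 0, rfl⟩
  obtain ⟨n₁, hn₁⟩ : ∃ n₁ : ℕ, ∀ m : ℕ, (A n₁).index ≤ (A m).index := by
    obtain ⟨n₁, hn₁⟩ := Nat.find_spec hex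
    exact ⟨n₁, fun m => hn₁ ▸ Nat.find_min' hex ⟨m, rfl⟩⟩
  -- the chain `A` is constant from `n₁` on
  have hAeq : ∀ m : ℕ, n₁ ≤ m → A m = A n₁ := by
    intro m hm
    have hle : A n₁ ≤ A m := hAle n₁ m hm
    have hdvd : (A m).index ∣ (A n₁).index := Subgroup.index_dvd_of_le hle
    have hpos : 0 < (A m).index := Nat.pos_of_ne_zero (hAfin m).index_ne_zero
    have hieq : (A m).index = (A n₁).index :=
      le_antisymm (Nat.le_of_dvd (Nat.pos_of_ne_zero (hAfin n₁).index_ne_zero) hdvd) (hn₁ m)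
    have hrel := Subgroup.relIndex_mul_index hle
    rw [hieq] at hrel
    have h1 : (A n₁).relIndex (A m) = 1 := by
      have := hrel
      nth_rewrite 2 [← one_mul ((A n₁).index)] at this
      exact Nat.eq_of_mul_eq_mul_right (Nat.pos_of_ne_zero (hAfin n₁).index_ne_zero) this
    exact le_antisymm (Subgroup.relIndex_eq_one.mp h1) hle
  -- key step : an element of `ker φ ∩ R m` lies in `R (m+1)`, for `m ≥ n₁`
  have hstep : ∀ m : ℕ, n₁ ≤ m → ∀ x : G, φ x = 1 → x ∈ R m → x ∈ R (m + 1) := by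
    intro m hm x hker hx
    obtain ⟨y, hy⟩ := (hmem m x).mp hx
    have h1 : (φ ^ (m + 1) : Monoid.End G) y = 1 := by
      rw [happ' m y, hy, hker]
    have hyA : y ∈ A (m + 1) := by
      refine (hAmem (m + 1) y).mpr ?_
      rw [h1]; exact Subgroup.one_mem _
    have hyA' : y ∈ A m := by
      rw [hAeq (m + 1) (le_trans hm (Nat.le_succ m)), ← hAeq m hm] at hyA
      exact hyA
    have := (hAmem m y).mp hyA'
    rw [hy] at this
    exact this
  -- hence such an element lies in every `R m`
  have hall : ∀ x : G, φ x = 1 → x ∈ R n₁ → ∀ m : ℕ, x ∈ R m := by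
    intro x hker hx m
    rcases Nat.le_total m n₁ with h | h
    · exact hRle m n₁ h hx
    · obtain ⟨k, rfl⟩ := Nat.exists_eq_add_of_le h
      clear h
      induction k with
      | zero => exact hx
      | succ j ih => exact hstep (n₁ + j) (Nat.le_add_right _ _) x hker ih
  -- residual finiteness + finitely many homs to a finite group : such an element is 1
  have htriv : ∀ x : G, φ x = 1 → x ∈ R n₁ → x = 1 := by
    intro x hker hx
    by_contra hx1
    obtain ⟨N, hNnormal, hNfin, hxN⟩ := hres x hx1
    haveI := hNnormal
    haveI := hNfin
    haveI : Finite (G ⧸ N) := N.finite_quotient_of_finiteIndex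
    obtain ⟨S, hScl, hSfin⟩ := Group.fg_iff.mp ‹Group.FG G›
    haveI : Finite S := hSfin.to_subtype
    haveI : Finite (G →* G ⧸ N) := by
      refine Finite.of_injective (fun g : G →* G ⧸ N => fun s : S => g s) ?_
      intro g₁ g₂ h
      refine MonoidHom.eq_of_eqOn_dense hScl ?_
      intro s hs
      exact congrFun h ⟨s, hs⟩
    set F : ℕ → (G →* G ⧸ N) := fun k =>
      (QuotientGroup.mk' N).comp ((φ ^ k : Monoid.End G) : G →* G) with hF
    obtain ⟨i, j, hne, hFeq⟩ := Finite.exists_ne_map_eq_of_infinite F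
    -- wlog i < j
    have key : ∀ i k : ℕ, F i = F (i + (k + 1)) → False := by
      intro i k hEq
      obtain ⟨g, hg⟩ := (hmem i x).mp (hall x hker hx i)
      have h2 : (QuotientGroup.mk' N) x
          = (QuotientGroup.mk' N) ((φ ^ (i + (k + 1)) : Monoid.End G) g) := by
        have := congrArg (fun f : G →* G ⧸ N => f g) hEq
        rw [← hg]; exact this
      have hsplit : (φ ^ (i + (k + 1)) : Monoid.End G) g = (φ ^ (k + 1) : Monoid.End G) x := by
        rw [← hg, Nat.add_comm i (k + 1), pow_add]
        rfl
      have hone : (φ ^ (k + 1) : Monoid.End G) x = 1 := by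
        rw [happ k x, hker, map_one]
      rw [hsplit, hone, map_one] at h2
      have : x ∈ N := (QuotientGroup.eq_one_iff x).mp h2
      exact hxN this
    rcases hne.lt_or_gt with h | h
    · obtain ⟨k, rfl⟩ := Nat.exists_eq_add_of_lt h
      exact key i k hFeq
    · obtain ⟨k, rfl⟩ := Nat.exists_eq_add_of_lt h
      exact key j k hFeq.symm
  -- conclusion
  refine ⟨n₁, hRfin n₁, hRfin (n₁ + 1), ?_, hmapR n₁⟩
  intro a ha b hb hab
  have hker : φ (a * b⁻¹) = 1 := by
    have : φ a = φ b := hab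
    rw [map_mul, map_inv, this, mul_inv_cancel]
  have hmemR : a * b⁻¹ ∈ R n₁ := Subgroup.mul_mem _ ha (Subgroup.inv_mem _ hb)
  have := htriv (a * b⁻¹) hker hmemR
  exact mul_inv_eq_one.mp this
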